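/- Let b = 2^t - 1 with t ≥ 2, and let n, d be even positive integers. Then ν_2((b^n - 1)(b^d - 1)) > ν_2((b^{nd} - 1)(b - 1)), so (b^n - 1)(b^d - 1) does not divide (b^{nd} - 1)(b - 1). -/
import Mathlib

theorem stmt_11 (t n d : ℕ) (ht : 2 ≤ t) (hn : 0 < n) (hd : 0 < d)
    (hne : Even n) (hde : Even d) :
    padicValNat 2 (((2 ^ t - 1) ^ n - 1) * ((2 ^ t - 1) ^ d - 1)) >
        padicValNat 2 (((2 ^ t - 1) ^ (n * d) - 1) * ((2 ^ t - 1) - 1)) ∧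
      ¬ (((2 ^ t - 1) ^ n - 1) * ((2 ^ t - 1) ^ d - 1) ∣
          ((2 ^ t - 1) ^ (n * d) - 1) * ((2 ^ t - 1) - 1)) := by
  set b := 2 ^ t - 1 with hb
  have h4 : 4 ≤ 2 ^ t := by
    calc (4:ℕ) = 2 ^ 2 := rfl
    _ ≤ 2 ^ t := Nat.pow_le_pow_right (by norm_num) ht
  have hb1 : 1 < b := by omega
  -- key: padicValNat 2 (b^m - 1) = t + padicValNat 2 m for even positive m
  have key : ∀ m : ℕ, 0 < m → Even m →
      padicValNat 2 (b ^ m - 1) = t + padicValNat 2 m := by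
    intro m hm hme
    have h2 : (2:ℕ) ∣ b - 1 := by
      have : b - 1 = 2 * (2 ^ (t-1) - 1) := by
        rw [hb]
        have : 2 ^ t = 2 * 2 ^ (t-1) := by
          rw [← pow_succ']
          congr 1
          omega
        omega
      exact ⟨_, this⟩
    have hbodd : ¬ (2:ℕ) ∣ b := by
      intro hdvd
      have h2t : (2:ℕ) ∣ 2 ^ t := dvd_pow_self 2 (by omega)
      omega
    have := padicValNat.pow_two_sub_pow (x := b) (y := 1) hb1 (by simpa using h2)
      hbodd hm.ne' hme
    simp only [one_pow] at this
    have hbp1 : b + 1 = 2 ^ t := by omega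
    have hv1 : padicValNat 2 (b + 1) = t := by rw [hbp1, padicValNat.prime_pow]
    have hv2 : padicValNat 2 (b - 1) = 1 := by
      have heq : b - 1 = 2 * (2 ^ (t-1) - 1) := by
        have : 2 ^ t = 2 * 2 ^ (t-1) := by
          rw [← pow_succ']; congr 1; omega
        omega
      have hodd : ¬ (2:ℕ) ∣ (2 ^ (t-1) - 1) := by
        intro hdvd
        have h2t : (2:ℕ) ∣ 2 ^ (t-1) := dvd_pow_self 2 (by omega)
        have : 2 ≤ 2 ^ (t-1) := Nat.one_lt_two_pow_iff.mpr (by omega)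
        omega
      rw [heq, padicValNat.mul (by norm_num)
        (by intro h; rw [h] at hodd; exact hodd (dvd_zero 2)),
        padicValNat.self (by norm_num), padicValNat.eq_zero_of_not_dvd hodd]
    omega
  have hnd : 0 < n * d := Nat.mul_pos hn hd
  have hpos : ∀ m : ℕ, 0 < m → 0 < b ^ m - 1 := fun m hm =>
    Nat.sub_pos_of_lt (Nat.one_lt_pow (by omega) hb1)
  have hL : padicValNat 2 ((b ^ n - 1) * (b ^ d - 1)) =
      2 * t + padicValNat 2 n + padicValNat 2 d := by
    rw [padicValNat.mul (hpos n hn).ne' (hpos d hd).ne', key n hn hne, key d hd hde]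
    ring
  have hR : padicValNat 2 ((b ^ (n*d) - 1) * (b - 1)) =
      t + padicValNat 2 n + padicValNat 2 d + 1 := by
    rw [padicValNat.mul (hpos _ hnd).ne' (by omega), key (n*d) hnd (hne.mul_right d),
      padicValNat.mul hn.ne' hd.ne']
    have hv2 : padicValNat 2 (b - 1) = 1 := by
      have heq : b - 1 = 2 * (2 ^ (t-1) - 1) := by
        have : 2 ^ t = 2 * 2 ^ (t-1) := by
          rw [← pow_succ']; congr 1; omega
        omega
      have hodd : ¬ (2:ℕ) ∣ (2 ^ (t-1) - 1) := by
        intro hdvd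
        have h2t : (2:ℕ) ∣ 2 ^ (t-1) := dvd_pow_self 2 (by omega)
        have : 2 ≤ 2 ^ (t-1) := Nat.one_lt_two_pow_iff.mpr (by omega)
        omega
      rw [heq, padicValNat.mul (by norm_num)
        (by intro h; rw [h] at hodd; exact hodd (dvd_zero 2)),
        padicValNat.self (by norm_num), padicValNat.eq_zero_of_not_dvd hodd]
    rw [hv2]; ring
  have hgt : padicValNat 2 ((b ^ n - 1) * (b ^ d - 1)) >
      padicValNat 2 ((b ^ (n*d) - 1) * (b - 1)) := by
    rw [hL, hR]; omega
  refine ⟨hgt, fun hdvd => ?_⟩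
  have hRne : (b ^ (n*d) - 1) * (b - 1) ≠ 0 :=
    Nat.mul_ne_zero (hpos _ hnd).ne' (by omega)
  have hle : padicValNat 2 ((b ^ n - 1) * (b ^ d - 1)) ≤
      padicValNat 2 ((b ^ (n*d) - 1) * (b - 1)) := by
    rw [← padicValNat_dvd_iff_le hRne]
    exact dvd_trans pow_padicValNat_dvd hdvd
  omega
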